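/- Let P(z) = P0 + P1·z + P2·z² be a regular quadratic matrix polynomial with P0, P1, P2 ∈ ℂ^{n×n} (i.e., the scalar polynomial det P(z) is not the zero polynomial), and let (X, U), with X ∈ ℂ^{ℓ×ℓ} and U ∈ ℂ^{ℓ×n}, be a left invariant pair of P(z). Then the characteristic polynomial of X divides det P(z) in ℂ[z]; in particular, every eigenvalue of X, counted with algebraic multiplicity, is a finite eigenvalue of P(z). -/

import Mathlib

open Polynomial Matrix

/-- The scalar polynomial `det (P0 + P1 z + P2 z²)` of a quadratic matrix polynomial. -/
noncomputable def quadDetPoly {n : ℕ} (P0 P1 P2 : Matrix (Fin n) (Fin n) ℂ) : Polynomial ℂ :=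
  Matrix.det (P0.map Polynomial.C + (Polynomial.X : Polynomial ℂ) • P1.map Polynomial.C
    + (Polynomial.X ^ 2 : Polynomial ℂ) • P2.map Polynomial.C)

private lemma charmatrix_eq_aux {ℓ : ℕ} (X : Matrix (Fin ℓ) (Fin ℓ) ℂ) :
    charmatrix X = (Polynomial.X : Polynomial ℂ) • (1 : Matrix (Fin ℓ) (Fin ℓ) (Polynomial ℂ))
      - X.map Polynomial.C := by
  ext i j
  by_cases h : i = j
  · subst h
    simp [charmatrix_apply_eq, Matrix.smul_apply, Matrix.one_apply, Matrix.map_apply]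
  · simp [charmatrix_apply_ne _ _ _ h, Matrix.smul_apply, Matrix.one_apply, h, Matrix.map_apply]

/-- Key bordering lemma: if the constant matrix `A` has linearly independent rows and
`A * L = charmatrix X * T` over `ℂ[z]`, then `charpoly X ∣ det L`. -/
private lemma charpoly_dvd_det_aux {ℓ : ℕ} {m : Type*} [Fintype m] [DecidableEq m]
    (X : Matrix (Fin ℓ) (Fin ℓ) ℂ) (A : Matrix (Fin ℓ) m ℂ)
    (hA : LinearIndependent ℂ (fun i => A i))
    (L : Matrix m m (Polynomial ℂ)) (T : Matrix (Fin ℓ) m (Polynomial ℂ))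
    (hfac : A.map Polynomial.C * L = charmatrix X * T) :
    X.charpoly ∣ L.det := by
  classical
  obtain ⟨q, hq⟩ := (Submodule.span ℂ (Set.range (fun i => A i))).exists_isCompl
  let k := Module.finrank ℂ q
  let b : Module.Basis (Fin k) ℂ q := Module.finBasis ℂ q
  let Vb : Matrix (Fin k) m ℂ := Matrix.of (fun j => (b j : m → ℂ))
  let S : Matrix (Fin ℓ ⊕ Fin k) m ℂ := Matrix.fromRows A Vb
  have hspanVb : Submodule.span ℂ (Set.range (fun j => (b j : m → ℂ))) = q := by
    have h1 : (Set.range fun j => (b j : m → ℂ)) = q.subtype '' (Set.range b) := by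
      rw [← Set.range_comp]; rfl
    rw [h1, Submodule.span_image, b.span_eq, Submodule.map_top, Submodule.range_subtype]
  have hb' : LinearIndependent ℂ (fun j => (b j : m → ℂ)) :=
    b.linearIndependent.map' q.subtype q.ker_subtype
  have hrows : LinearIndependent ℂ (fun i => S i) := by
    have hd : Disjoint (Submodule.span ℂ (Set.range fun i => A i))
        (Submodule.span ℂ (Set.range fun j => (b j : m → ℂ))) := by
      rw [hspanVb]; exact hq.disjoint
    exact hA.sum_type hb' hd
  have hsp : Module.finrank ℂ (Submodule.span ℂ (Set.range fun i => A i)) = ℓ := by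
    have h := linearIndependent_iff_card_eq_finrank_span.mp hA
    simpa [Set.finrank] using h.symm
  have hcard : Fintype.card (Fin ℓ ⊕ Fin k) = Fintype.card m := by
    have h2 := Submodule.finrank_add_eq_of_isCompl hq
    rw [hsp] at h2
    simp only [Fintype.card_sum, Fintype.card_fin]
    have h3 : Module.finrank ℂ (m → ℂ) = Fintype.card m := Module.finrank_fintype_fun_eq_card ℂ
    show ℓ + Module.finrank ℂ q = Fintype.card m
    rw [h2, h3]
  let e : m ≃ (Fin ℓ ⊕ Fin k) := Fintype.equivOfCardEq hcard.symm
  have hS'unit : IsUnit (S.submatrix e id) := by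
    rw [← Matrix.linearIndependent_rows_iff_isUnit]
    exact hrows.comp e e.injective
  have hdet0 : (S.submatrix e id).det ≠ 0 :=
    isUnit_iff_ne_zero.mp ((Matrix.isUnit_iff_isUnit_det _).mp hS'unit)
  set F : Matrix (Fin ℓ ⊕ Fin k) m (Polynomial ℂ) :=
    Matrix.fromRows T ((Vb.map Polynomial.C) * L) with hF
  have hSmap : S.map (Polynomial.C : ℂ → Polynomial ℂ)
      = Matrix.fromRows (A.map Polynomial.C) (Vb.map Polynomial.C) := by
    ext (i | i) j <;> rfl
  have hSL : S.map Polynomial.C * L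
      = (Matrix.fromBlocks (charmatrix X) 0 0 (1 : Matrix (Fin k) (Fin k) (Polynomial ℂ))) * F := by
    rw [hSmap, Matrix.fromRows_mul, hfac, hF, Matrix.fromBlocks_mul_fromRows]
    simp
  have e1 : ((S.map Polynomial.C).submatrix e id) * L
      = (S.map Polynomial.C * L).submatrix e id := by
    have h := Matrix.submatrix_mul_equiv (S.map (Polynomial.C : ℂ → Polynomial ℂ)) L
      e (Equiv.refl m) id
    simpa using h
  have e2 : ((Matrix.fromBlocks (charmatrix X) 0 0
        (1 : Matrix (Fin k) (Fin k) (Polynomial ℂ))).submatrix e e) * (F.submatrix e id)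
      = ((Matrix.fromBlocks (charmatrix X) 0 0 (1 : Matrix (Fin k) (Fin k) (Polynomial ℂ))) * F).submatrix e id :=
    Matrix.submatrix_mul_equiv _ _ e e id
  have hdetkey : Polynomial.C (S.submatrix e id).det * L.det
      = X.charpoly * (F.submatrix e id).det := by
    calc Polynomial.C (S.submatrix e id).det * L.det
        = ((S.map Polynomial.C).submatrix e id).det * L.det := by
          rw [RingHom.map_det, RingHom.mapMatrix_apply, Matrix.submatrix_map]
      _ = (((S.map Polynomial.C) * L).submatrix e id).det := by
          rw [← Matrix.det_mul, e1]
      _ = (((Matrix.fromBlocks (charmatrix X) 0 0 (1 : Matrix (Fin k) (Fin k) (Polynomial ℂ))) * F).submatrix e id).det := by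
          rw [hSL]
      _ = ((Matrix.fromBlocks (charmatrix X) 0 0
            (1 : Matrix (Fin k) (Fin k) (Polynomial ℂ))).submatrix e e).det
            * (F.submatrix e id).det := by rw [← e2, Matrix.det_mul]
      _ = X.charpoly * (F.submatrix e id).det := by
          rw [Matrix.det_submatrix_equiv_self, Matrix.det_fromBlocks_zero₁₂,
            Matrix.det_one, mul_one]
          rfl
  have hunit : IsUnit (Polynomial.C (S.submatrix e id).det) :=
    Polynomial.isUnit_C.mpr (isUnit_iff_ne_zero.mpr hdet0)
  have hdvd : X.charpoly ∣ Polynomial.C (S.submatrix e id).det * L.det := by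
    rw [hdetkey]; exact dvd_mul_right _ _
  exact (hunit.dvd_mul_left).mp hdvd

/-- If `(X, U)` is a left invariant pair of the regular quadratic matrix polynomial
`P(z) = P0 + P1 z + P2 z²`, then the characteristic polynomial of `X` divides `det P(z)`. -/
theorem charpoly_dvd_det_of_left_invariant_pair {n ℓ : ℕ}
    (P0 P1 P2 : Matrix (Fin n) (Fin n) ℂ)
    (hreg : quadDetPoly P0 P1 P2 ≠ 0)
    (X : Matrix (Fin ℓ) (Fin ℓ) ℂ) (U : Matrix (Fin ℓ) (Fin n) ℂ)
    (heq : U * P0 + X * U * P1 + X ^ 2 * U * P2 = 0)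
    (hrank : (Matrix.fromCols U (X * U)).rank = ℓ) :
    X.charpoly ∣ quadDetPoly P0 P1 P2 := by
  classical
  rw [pow_two] at heq
  set Pc0 : Matrix (Fin n) (Fin n) (Polynomial ℂ) := P0.map Polynomial.C with hPc0
  set Pc1 : Matrix (Fin n) (Fin n) (Polynomial ℂ) := P1.map Polynomial.C with hPc1
  set Pc2 : Matrix (Fin n) (Fin n) (Polynomial ℂ) := P2.map Polynomial.C with hPc2
  set Uc : Matrix (Fin ℓ) (Fin n) (Polynomial ℂ) := U.map Polynomial.C with hUc
  set Xc : Matrix (Fin ℓ) (Fin ℓ) (Polynomial ℂ) := X.map Polynomial.C with hXc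
  -- linear independence of the rows of [U, XU]
  have hA : LinearIndependent ℂ (fun i => (Matrix.fromCols U (X * U)) i) := by
    apply linearIndependent_iff_card_eq_finrank_span.mpr
    rw [Fintype.card_fin]
    have h := (Matrix.fromCols U (X * U)).rank_eq_finrank_span_row
    rw [hrank] at h
    exact h
  -- the invariant pair relation over ℂ[z]
  have hmadd : ∀ (M N : Matrix (Fin ℓ) (Fin n) ℂ),
      (M + N).map (Polynomial.C : ℂ → Polynomial ℂ)
        = M.map Polynomial.C + N.map Polynomial.C :=
    fun M N => Matrix.map_add _ (fun a b => by simp) M N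
  have heqC : Uc * Pc0 + Xc * Uc * Pc1 + Xc * Xc * Uc * Pc2 = 0 := by
    have h := congrArg
      (fun M : Matrix (Fin ℓ) (Fin n) ℂ => M.map (Polynomial.C : ℂ → Polynomial ℂ)) heq
    have hm0 : (0 : Matrix (Fin ℓ) (Fin n) ℂ).map (Polynomial.C : ℂ → Polynomial ℂ) = 0 :=
      Matrix.map_zero _ (map_zero Polynomial.C)
    simp only [hmadd, Matrix.map_mul, hm0] at h
    exact h
  -- the linearization pencil
  set L : Matrix (Fin n ⊕ Fin n) (Fin n ⊕ Fin n) (Polynomial ℂ) :=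
    Matrix.fromBlocks ((Polynomial.X : Polynomial ℂ) • (1 : Matrix (Fin n) (Fin n) (Polynomial ℂ))) Pc0 (-1) ((Polynomial.X : Polynomial ℂ) • Pc2 + Pc1) with hL
  set T : Matrix (Fin ℓ) (Fin n ⊕ Fin n) (Polynomial ℂ) :=
    Matrix.fromCols Uc (Xc * Uc * Pc2) with hT
  have hACmap : (Matrix.fromCols U (X * U)).map (Polynomial.C : ℂ → Polynomial ℂ)
      = Matrix.fromCols Uc (Xc * Uc) := by
    have : ((X * U).map (Polynomial.C : ℂ → Polynomial ℂ)) = Xc * Uc := Matrix.map_mul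
    rw [← this]
    ext i (j | j) <;> rfl
  have hfac : (Matrix.fromCols U (X * U)).map Polynomial.C * L = charmatrix X * T := by
    rw [hACmap, hL, hT, Matrix.fromCols_mul_fromBlocks, charmatrix_eq_aux,
      Matrix.mul_fromCols, ← hXc, Matrix.fromCols_ext_iff]
    constructor
    · rw [Matrix.mul_smul, Matrix.mul_one, Matrix.mul_neg, Matrix.mul_one, Matrix.sub_mul,
        Matrix.smul_mul, Matrix.one_mul, sub_eq_add_neg]
    · have h3 : Uc * Pc0 + Xc * Uc * Pc1 = -(Xc * Xc * Uc * Pc2) :=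
        eq_neg_of_add_eq_zero_left heqC
      rw [Matrix.mul_add, Matrix.mul_smul, Matrix.sub_mul, Matrix.smul_mul, Matrix.one_mul]
      rw [show Xc * (Xc * Uc * Pc2) = Xc * Xc * Uc * Pc2 by
        rw [← Matrix.mul_assoc, ← Matrix.mul_assoc]]
      have h4 : Uc * Pc0 + ((Polynomial.X : Polynomial ℂ) • (Xc * Uc * Pc2) + Xc * Uc * Pc1)
          = (Polynomial.X : Polynomial ℂ) • (Xc * Uc * Pc2) + (Uc * Pc0 + Xc * Uc * Pc1) := by
        abel
      rw [h4, h3]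
      abel
  have hdvdL := charpoly_dvd_det_aux X (Matrix.fromCols U (X * U)) hA L T hfac
  -- relate det L to quadDetPoly
  set Q : Matrix (Fin n) (Fin n) (Polynomial ℂ) :=
    Pc0 + (Polynomial.X : Polynomial ℂ) • Pc1 + (Polynomial.X ^ 2 : Polynomial ℂ) • Pc2 with hQ
  have h5 : (Matrix.fromBlocks 1 ((Polynomial.X : Polynomial ℂ) • (1 : Matrix (Fin n) (Fin n) (Polynomial ℂ)))
        0 1) * L * (Matrix.fromBlocks 0 (-1) 1 0)
      = Matrix.fromBlocks Q 0 ((Polynomial.X : Polynomial ℂ) • Pc2 + Pc1) 1 := by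
    rw [hL, Matrix.fromBlocks_multiply, Matrix.fromBlocks_multiply, Matrix.fromBlocks_inj]
    refine ⟨?_, ?_, ?_, ?_⟩
    · rw [hQ]
      simp [Matrix.mul_smul, Matrix.mul_add, smul_smul, ← pow_two]
      abel
    · simp
    · simp
    · simp
  have hdet5 := congrArg Matrix.det h5
  rw [Matrix.det_mul, Matrix.det_mul, Matrix.det_fromBlocks_zero₂₁,
    Matrix.det_fromBlocks_zero₁₂, Matrix.det_one, one_mul, one_mul, mul_one] at hdet5
  have hQdet : quadDetPoly P0 P1 P2 = Q.det := by
    rw [quadDetPoly, hQ, hPc0, hPc1, hPc2]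
  rw [hQdet, ← hdet5]
  exact Dvd.dvd.mul_right hdvdL _
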